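/- Let ℬ and 𝒜 be abelian categories and F : ℬ ⥤ Ch_{≥0}(𝒜) a functor into non-negatively graded chain complexes, with cross effects computed by the kernel formula in the abelian category Ch_{≥0}(𝒜). If for some k ≥ 1 the chain complex cr_kF(X₁,…,X_k) is contractible for all objects X₁,…,X_k of ℬ, then cr_{k+1}F(X₁,…,X_{k+1}) is contractible for all objects X₁,…,X_{k+1}; consequently cr_ℓF is objectwise contractible for every ℓ ≥ k. -/

import Mathlib

/-!
Statement 7: Let ℬ, 𝒜 be abelian categories and `F : ℬ ⥤ Ch_{≥0}(𝒜)` a functor into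
non-negatively graded chain complexes, with cross effects computed by the kernel formula in the
abelian category `Ch_{≥0}(𝒜) = ChainComplex 𝒜 ℕ`.  If for some `k ≥ 1` the chain complex
`cr_k F (X₁,…,X_k)` is contractible for all objects, then so is `cr_{k+1} F (X₁,…,X_{k+1})`;
consequently `cr_ℓ F` is objectwise contractible for every `ℓ ≥ k`.

Here `crObj m F` is the `(m+1)`-st cross effect (as `m` ranges over `ℕ` the arity `m+1`
ranges over all integers `≥ 1`), and contractible means the identity is chain null-homotopic.
-/

open CategoryTheory CategoryTheory.Limits ZeroObject

attribute [local instance] CategoryTheory.Abelian.hasFiniteBiproducts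

universe v u v' u'

variable {B : Type u} [Category.{v} B] [Abelian B]
variable {A : Type u'} [Category.{v'} A] [Abelian A]

/-- The morphism collapsing the `j`-th summand to zero. -/
noncomputable def collapse {n : ℕ} (X : Fin (n + 1) → B) (j : Fin (n + 1)) :
    (⨁ X) ⟶ ⨁ (X ∘ j.succAbove) :=
  biproduct.lift fun k => biproduct.π X (j.succAbove k)

/-- The `(n+1)`-st cross effect of a functor `F : ℬ ⥤ 𝒯` into an abelian category `𝒯`
(here applied with `𝒯 = Ch_{≥0}(𝒜)`), computed by the kernel formula in `𝒯`. -/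
noncomputable def crObj {T : Type*} [Category T] [Abelian T]
    (n : ℕ) (F : B ⥤ T) (X : Fin (n + 1) → B) : T :=
  kernel (biproduct.lift fun j : Fin (n + 1) => F.map (collapse X j))

namespace CrAux


/-- The idempotent endomorphism of `⨁ X` killing the `j`-th coordinate. -/
noncomputable def pmap {n : ℕ} (X : Fin (n + 1) → B) (j : Fin (n + 1)) : (⨁ X) ⟶ (⨁ X) :=
  collapse X j ≫ biproduct.desc (fun k => biproduct.ι X (j.succAbove k))

lemma pmap_eq_sum {n : ℕ} (X : Fin (n + 1) → B) (j : Fin (n + 1)) :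
    pmap X j = ∑ k : Fin n, biproduct.π X (j.succAbove k) ≫ biproduct.ι X (j.succAbove k) := by
  rw [pmap, collapse, biproduct.lift_desc]

lemma ι_pmap {n : ℕ} (X : Fin (n + 1) → B) (j a : Fin (n + 1)) :
    biproduct.ι X a ≫ pmap X j = if a = j then 0 else biproduct.ι X a := by
  rw [pmap_eq_sum, Preadditive.comp_sum]
  rcases eq_or_ne a j with rfl | haj
  · rw [if_pos rfl]
    apply Finset.sum_eq_zero
    intro k _
    rw [← Category.assoc, biproduct.ι_π_ne _ (Fin.ne_succAbove a k), zero_comp]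
  · obtain ⟨k₀, rfl⟩ := Fin.exists_succAbove_eq haj
    rw [if_neg haj, Finset.sum_eq_single k₀]
    · rw [← Category.assoc, biproduct.ι_π_self, Category.id_comp]
    · intro k _ hk
      rw [← Category.assoc,
        biproduct.ι_π_ne _ (fun he => hk ((Fin.succAbove_right_injective he).symm)), zero_comp]
    · simp

lemma pmap_π {n : ℕ} (X : Fin (n + 1) → B) (j b : Fin (n + 1)) :
    pmap X j ≫ biproduct.π X b = if b = j then 0 else biproduct.π X b := by
  rw [pmap_eq_sum, Preadditive.sum_comp]
  rcases eq_or_ne b j with rfl | hbj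
  · rw [if_pos rfl]
    apply Finset.sum_eq_zero
    intro k _
    rw [Category.assoc, biproduct.ι_π_ne _ (Fin.succAbove_ne b k), comp_zero]
  · obtain ⟨k₀, rfl⟩ := Fin.exists_succAbove_eq hbj
    rw [if_neg hbj, Finset.sum_eq_single k₀]
    · rw [Category.assoc, biproduct.ι_π_self, Category.comp_id]
    · intro k _ hk
      rw [Category.assoc,
        biproduct.ι_π_ne _ (fun he => hk (Fin.succAbove_right_injective he)), comp_zero]
    · simp

lemma ι_pmap_pmap {n : ℕ} (X : Fin (n + 1) → B) (j j' a : Fin (n + 1)) :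
    biproduct.ι X a ≫ (pmap X j ≫ pmap X j') =
      if a = j ∨ a = j' then 0 else biproduct.ι X a := by
  rcases eq_or_ne a j with rfl | haj
  · rw [← Category.assoc, ι_pmap, if_pos rfl, zero_comp, if_pos (Or.inl rfl)]
  · rw [← Category.assoc, ι_pmap, if_neg haj, ι_pmap]
    rcases eq_or_ne a j' with rfl | haj'
    · rw [if_pos rfl, if_pos (Or.inr rfl)]
    · rw [if_neg haj', if_neg (by tauto)]

lemma pmap_comm {n : ℕ} (X : Fin (n + 1) → B) (j j' : Fin (n + 1)) :
    pmap X j ≫ pmap X j' = pmap X j' ≫ pmap X j := by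
  apply biproduct.hom_ext'
  intro a
  rw [ι_pmap_pmap, ι_pmap_pmap]
  exact if_congr or_comm rfl rfl

lemma pmap_idem {n : ℕ} (X : Fin (n + 1) → B) (j : Fin (n + 1)) :
    pmap X j ≫ pmap X j = pmap X j := by
  apply biproduct.hom_ext'
  intro a
  rw [ι_pmap_pmap, ι_pmap]
  exact if_congr or_self_iff rfl rfl

lemma pmap_collapse {n : ℕ} (X : Fin (n + 1) → B) (j : Fin (n + 1)) :
    pmap X j ≫ collapse X j = collapse X j := by
  apply biproduct.hom_ext
  intro k'
  rw [Category.assoc]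
  simp only [collapse, biproduct.lift_π]
  rw [pmap_π, if_neg (Fin.succAbove_ne j k')]

section Functor

variable {T : Type u'} [Category.{v'} T] [Abelian T]

lemma comp_map_collapse_zero_iff {n : ℕ} (F : B ⥤ T) (X : Fin (n + 1) → B) (j : Fin (n + 1))
    {W : T} (f : W ⟶ F.obj (⨁ X)) :
    f ≫ F.map (collapse X j) = 0 ↔ f ≫ F.map (pmap X j) = 0 := by
  constructor
  · intro hf
    rw [pmap, F.map_comp, ← Category.assoc, hf, zero_comp]
  · intro hf
    rw [← pmap_collapse, F.map_comp, ← Category.assoc, hf, zero_comp]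

lemma comp_L_zero_iff {n : ℕ} (F : B ⥤ T) (X : Fin (n + 1) → B)
    {W : T} (f : W ⟶ F.obj (⨁ X)) :
    f ≫ (biproduct.lift fun j : Fin (n + 1) => F.map (collapse X j)) = 0 ↔
      ∀ j, f ≫ F.map (pmap X j) = 0 := by
  constructor
  · intro hf j
    rw [← comp_map_collapse_zero_iff]
    have := congrArg (· ≫ biproduct.π _ j) hf
    simpa using this
  · intro hf
    apply biproduct.hom_ext
    intro j
    rw [Category.assoc, biproduct.lift_π, zero_comp]
    exact (comp_map_collapse_zero_iff F X j f).mpr (hf j)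

end Functor


/-- The family with the first two objects merged. -/
noncomputable def mergedY {n : ℕ} (X : Fin (n + 2) → B) : Fin (n + 1) → B :=
  Fin.cons (X 0 ⊞ X (Fin.succ 0)) (fun j => X j.succ.succ)

noncomputable def ins {n : ℕ} (X : Fin (n + 2) → B) (k : Fin (n + 1)) :
    mergedY X k ⟶ ⨁ X :=
  Fin.cases (biprod.desc (biproduct.ι X 0) (biproduct.ι X (Fin.succ 0)))
    (fun j => biproduct.ι X j.succ.succ) k

noncomputable def outs {n : ℕ} (X : Fin (n + 2) → B) (k : Fin (n + 1)) :
    (⨁ X) ⟶ mergedY X k :=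
  Fin.cases (biprod.lift (biproduct.π X 0) (biproduct.π X (Fin.succ 0)))
    (fun j => biproduct.π X j.succ.succ) k

lemma ins_zero {n : ℕ} (X : Fin (n + 2) → B) :
    ins X 0 = biprod.desc (biproduct.ι X 0) (biproduct.ι X (Fin.succ 0)) := rfl

lemma ins_succ {n : ℕ} (X : Fin (n + 2) → B) (j : Fin n) :
    ins X j.succ = biproduct.ι X j.succ.succ := rfl

lemma outs_zero {n : ℕ} (X : Fin (n + 2) → B) :
    outs X 0 = biprod.lift (biproduct.π X 0) (biproduct.π X (Fin.succ 0)) := rfl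

lemma outs_succ {n : ℕ} (X : Fin (n + 2) → B) (j : Fin n) :
    outs X j.succ = biproduct.π X j.succ.succ := rfl

noncomputable def fwd {n : ℕ} (X : Fin (n + 2) → B) : (⨁ mergedY X) ⟶ ⨁ X :=
  biproduct.desc (ins X)

noncomputable def bwd {n : ℕ} (X : Fin (n + 2) → B) : (⨁ X) ⟶ ⨁ mergedY X :=
  biproduct.lift (outs X)

lemma bwd_fwd {n : ℕ} (X : Fin (n + 2) → B) : bwd X ≫ fwd X = 𝟙 (⨁ X) := by
  rw [bwd, fwd, biproduct.lift_desc, ← biproduct.total]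
  rw [Fin.sum_univ_succ (f := fun a : Fin (n + 2) => biproduct.π X a ≫ biproduct.ι X a),
    Fin.sum_univ_succ (f := fun a : Fin (n + 1) => biproduct.π X a.succ ≫ biproduct.ι X a.succ),
    Fin.sum_univ_succ (f := fun k : Fin (n + 1) => outs X k ≫ ins X k)]
  simp [outs_zero, outs_succ, ins_zero, ins_succ, biprod.lift_desc, add_assoc]
  erw [biprod.lift_desc]
  abel

lemma fwd_bwd {n : ℕ} (X : Fin (n + 2) → B) : fwd X ≫ bwd X = 𝟙 (⨁ mergedY X) := by
  apply biproduct.hom_ext'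
  intro k
  apply biproduct.hom_ext
  intro k'
  rw [Category.comp_id, Category.assoc, Category.assoc, fwd, bwd, biproduct.lift_π,
    biproduct.ι_desc_assoc]
  induction k using Fin.cases with
  | zero =>
    induction k' using Fin.cases with
    | zero =>
      rw [biproduct.ι_π_self]
      simp only [ins_zero, outs_zero]
      show biprod.desc (biproduct.ι X 0) (biproduct.ι X (Fin.succ 0)) ≫
          biprod.lift (biproduct.π X 0) (biproduct.π X (Fin.succ 0)) =
          𝟙 (X 0 ⊞ X (Fin.succ 0))
      have h1 : (0 : Fin (n + 2)) ≠ Fin.succ 0 := (Fin.succ_ne_zero 0).symm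
      apply biprod.hom_ext' <;> apply biprod.hom_ext <;>
        simp only [Category.assoc, Category.comp_id, Category.id_comp,
          biprod.inl_desc_assoc, biprod.inr_desc_assoc, biprod.lift_fst, biprod.lift_snd,
          biprod.inl_fst, biprod.inl_snd, biprod.inr_fst, biprod.inr_snd] <;>
        first
          | exact biproduct.ι_π_self _ _
          | exact biproduct.ι_π_ne _ h1
          | exact biproduct.ι_π_ne _ h1.symm
    | succ j' =>
      rw [biproduct.ι_π_ne _ (Fin.succ_ne_zero j').symm]
      simp only [ins_zero, ins_succ, outs_zero, outs_succ]
      apply biprod.hom_ext'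
      · erw [comp_zero, biprod.inl_desc_assoc]
        exact biproduct.ι_π_ne _ (Fin.succ_ne_zero _).symm
      · erw [comp_zero, biprod.inr_desc_assoc]
        exact biproduct.ι_π_ne _ (fun he => Fin.succ_ne_zero j' (Fin.succ_injective _ he).symm)
  | succ j =>
    induction k' using Fin.cases with
    | zero =>
      rw [biproduct.ι_π_ne _ (Fin.succ_ne_zero j)]
      simp only [ins_zero, ins_succ, outs_zero, outs_succ]
      apply biprod.hom_ext
      · erw [zero_comp, Category.assoc, biprod.lift_fst]
        exact biproduct.ι_π_ne _ (Fin.succ_ne_zero _)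
      · erw [zero_comp, Category.assoc, biprod.lift_snd]
        exact biproduct.ι_π_ne _ (fun he => Fin.succ_ne_zero j (Fin.succ_injective _ he))
    | succ j' =>
      simp only [ins_succ, outs_succ]
      rcases eq_or_ne j j' with rfl | hj
      · exact (biproduct.ι_π_self X j.succ.succ).trans (biproduct.ι_π_self (mergedY X) j.succ).symm
      · erw [biproduct.ι_π_ne _ (fun he => hj (Fin.succ_injective _ (Fin.succ_injective _ he))),
          biproduct.ι_π_ne _ (fun he => hj (Fin.succ_injective _ he))]
        rfl

/-- The conjugated coordinate-killing maps. -/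
noncomputable def pc {n : ℕ} (X : Fin (n + 2) → B) : Fin (n + 1) → ((⨁ X) ⟶ ⨁ X) :=
  Fin.cons (pmap X 0 ≫ pmap X (Fin.succ 0)) (fun j => pmap X j.succ.succ)

lemma ins_pc {n : ℕ} (X : Fin (n + 2) → B) (k j : Fin (n + 1)) :
    ins X k ≫ pc X j = if k = j then 0 else ins X k := by
  induction k using Fin.cases with
  | zero =>
    induction j using Fin.cases with
    | zero =>
      rw [if_pos rfl]
      simp only [ins_zero, pc, Fin.cons_zero]
      apply biprod.hom_ext'
      · erw [biprod.inl_desc_assoc, ι_pmap_pmap, if_pos (Or.inl rfl), comp_zero]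
      · erw [biprod.inr_desc_assoc, ι_pmap_pmap, if_pos (Or.inr rfl), comp_zero]
    | succ j' =>
      rw [if_neg (Fin.succ_ne_zero j').symm]
      simp only [ins_zero, pc, Fin.cons_succ]
      apply biprod.hom_ext'
      · erw [biprod.inl_desc_assoc, ι_pmap,
          if_neg (show (0 : Fin (n+2)) ≠ j'.succ.succ from (Fin.succ_ne_zero _).symm),
          biprod.inl_desc]
      · erw [biprod.inr_desc_assoc, ι_pmap,
          if_neg (show Fin.succ 0 ≠ j'.succ.succ from
            fun he => Fin.succ_ne_zero j' (Fin.succ_injective _ he).symm),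
          biprod.inr_desc]
  | succ k' =>
    induction j using Fin.cases with
    | zero =>
      rw [if_neg (Fin.succ_ne_zero k')]
      simp only [ins_succ, pc, Fin.cons_zero]
      erw [ι_pmap_pmap, if_neg]
      rintro (he | he)
      · exact Fin.succ_ne_zero _ he
      · exact Fin.succ_ne_zero k' (Fin.succ_injective _ he)
    | succ j' =>
      simp only [ins_succ, pc, Fin.cons_succ]
      erw [ι_pmap]
      rcases eq_or_ne k' j' with rfl | hk
      · erw [if_pos rfl, if_pos rfl]
        rfl
      · erw [if_neg (fun he => hk (Fin.succ_injective _ (Fin.succ_injective _ he))),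
          if_neg (fun he => hk (Fin.succ_injective _ he))]

lemma pmap_merged {n : ℕ} (X : Fin (n + 2) → B) (j : Fin (n + 1)) :
    pmap (mergedY X) j ≫ fwd X = fwd X ≫ pc X j := by
  apply biproduct.hom_ext'
  intro k
  rw [← Category.assoc, ι_pmap, fwd, biproduct.ι_desc_assoc, ins_pc]
  rcases eq_or_ne k j with rfl | hk
  · rw [if_pos rfl, if_pos rfl, zero_comp]
  · rw [if_neg hk, if_neg hk, biproduct.ι_desc]


section Emap

variable {T : Type u'} [Category.{v'} T] [Abelian T]

/-- The retraction endomorphism of `F(⨁ X)` onto the part vanishing on the first two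
coordinates. -/
noncomputable def emap {n : ℕ} (F : B ⥤ T) (X : Fin (n + 2) → B) :
    F.obj (⨁ X) ⟶ F.obj (⨁ X) :=
  𝟙 _ - F.map (pmap X 0) - F.map (pmap X (Fin.succ 0)) +
    F.map (pmap X 0 ≫ pmap X (Fin.succ 0))

lemma emap_p0 {n : ℕ} (F : B ⥤ T) (X : Fin (n + 2) → B) :
    emap F X ≫ F.map (pmap X 0) = 0 := by
  have h1 : pmap X 0 ≫ pmap X 0 = pmap X 0 := pmap_idem X 0
  have h2 : (pmap X 0 ≫ pmap X (Fin.succ 0)) ≫ pmap X 0 =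
      pmap X 0 ≫ pmap X (Fin.succ 0) := by
    rw [Category.assoc, pmap_comm X (Fin.succ 0) 0, ← Category.assoc, pmap_idem]
  have h3 : pmap X (Fin.succ 0) ≫ pmap X 0 = pmap X 0 ≫ pmap X (Fin.succ 0) :=
    pmap_comm X (Fin.succ 0) 0
  simp only [emap, Preadditive.sub_comp, Preadditive.add_comp, Category.id_comp,
    ← F.map_comp, h1, h2, h3]
  abel

lemma emap_p1 {n : ℕ} (F : B ⥤ T) (X : Fin (n + 2) → B) :
    emap F X ≫ F.map (pmap X (Fin.succ 0)) = 0 := by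
  have h1 : pmap X (Fin.succ 0) ≫ pmap X (Fin.succ 0) = pmap X (Fin.succ 0) :=
    pmap_idem X (Fin.succ 0)
  have h2 : (pmap X 0 ≫ pmap X (Fin.succ 0)) ≫ pmap X (Fin.succ 0) =
      pmap X 0 ≫ pmap X (Fin.succ 0) := by
    rw [Category.assoc, h1]
  simp only [emap, Preadditive.sub_comp, Preadditive.add_comp, Category.id_comp,
    ← F.map_comp, h1, h2]
  abel

lemma emap_comm {n : ℕ} (F : B ⥤ T) (X : Fin (n + 2) → B) (c : Fin (n + 2)) :
    emap F X ≫ F.map (pmap X c) = F.map (pmap X c) ≫ emap F X := by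
  have hc : (pmap X 0 ≫ pmap X (Fin.succ 0)) ≫ pmap X c =
      pmap X c ≫ pmap X 0 ≫ pmap X (Fin.succ 0) := by
    rw [Category.assoc, pmap_comm X (Fin.succ 0) c, ← Category.assoc, pmap_comm X 0 c,
      Category.assoc]
  simp only [emap, Preadditive.sub_comp, Preadditive.add_comp, Preadditive.comp_sub,
    Preadditive.comp_add, Category.id_comp, Category.comp_id, ← F.map_comp]
  rw [pmap_comm X 0 c, pmap_comm X (Fin.succ 0) c, hc]

end Emap

/-- Contractibility is inherited by retracts. -/
noncomputable def retractHomotopy {C D : ChainComplex A ℕ} (i : C ⟶ D) (r : D ⟶ C)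
    (hir : i ≫ r = 𝟙 C) (H : Homotopy (𝟙 D) 0) : Homotopy (𝟙 C) 0 :=
  (Homotopy.ofEq (show 𝟙 C = (i ≫ 𝟙 D) ≫ r by rw [Category.comp_id, hir])).trans
    (((H.compLeft i).compRight r).trans (Homotopy.ofEq (by simp)))

/-- The inductive step: contractibility of all `(n+1)`-st cross effects implies
contractibility of all `(n+2)`-nd cross effects. -/
theorem step (n : ℕ) (F : B ⥤ ChainComplex A ℕ)
    (h : ∀ Xs : Fin (n + 1) → B, Nonempty (Homotopy (𝟙 (crObj n F Xs)) 0))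
    (X : Fin (n + 2) → B) : Nonempty (Homotopy (𝟙 (crObj (n + 1) F X)) 0) := by
  obtain ⟨H⟩ := h (mergedY X)
  let LX := biproduct.lift fun j : Fin (n + 2) => F.map (collapse X j)
  let LY := biproduct.lift fun j : Fin (n + 1) => F.map (collapse (mergedY X) j)
  have hι' : ∀ j, kernel.ι LX ≫ F.map (pmap X j) = 0 :=
    (comp_L_zero_iff F X _).mp (kernel.condition LX)
  have hκ : ∀ j, kernel.ι LY ≫ F.map (pmap (mergedY X) j) = 0 :=
    (comp_L_zero_iff F (mergedY X) _).mp (kernel.condition LY)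
  have hι'pc : ∀ j : Fin (n + 1), kernel.ι LX ≫ F.map (pc X j) = 0 := by
    intro j
    induction j using Fin.cases with
    | zero =>
      rw [pc, Fin.cons_zero, F.map_comp, ← Category.assoc, hι' 0, zero_comp]
    | succ j' =>
      rw [pc, Fin.cons_succ]
      exact hι' _
  have hb : ∀ j, bwd X ≫ pmap (mergedY X) j = pc X j ≫ bwd X := by
    intro j
    calc bwd X ≫ pmap (mergedY X) j
        = bwd X ≫ pmap (mergedY X) j ≫ fwd X ≫ bwd X := by
          rw [fwd_bwd, Category.comp_id]
      _ = (bwd X ≫ fwd X) ≫ pc X j ≫ bwd X := by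
          rw [← Category.assoc (pmap (mergedY X) j), pmap_merged]
          simp only [Category.assoc]
      _ = pc X j ≫ bwd X := by rw [bwd_fwd, Category.id_comp]
  have hi : (kernel.ι LX ≫ F.map (bwd X)) ≫ LY = 0 := by
    rw [comp_L_zero_iff]
    intro j
    rw [Category.assoc, ← F.map_comp, hb j, F.map_comp, ← Category.assoc, hι'pc j, zero_comp]
  have hw : ∀ j : Fin (n + 1), (kernel.ι LY ≫ F.map (fwd X)) ≫ F.map (pc X j) = 0 := by
    intro j
    rw [Category.assoc, ← F.map_comp, ← pmap_merged, F.map_comp, ← Category.assoc, hκ j,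
      zero_comp]
  have hr : ((kernel.ι LY ≫ F.map (fwd X)) ≫ emap F X) ≫ LX = 0 := by
    rw [comp_L_zero_iff]
    intro j
    induction j using Fin.cases with
    | zero => rw [Category.assoc, emap_p0, comp_zero]
    | succ j₁ =>
      induction j₁ using Fin.cases with
      | zero => rw [Category.assoc, emap_p1, comp_zero]
      | succ j₂ =>
        rw [Category.assoc, emap_comm, ← Category.assoc]
        have h2 : (kernel.ι LY ≫ F.map (fwd X)) ≫ F.map (pmap X j₂.succ.succ) = 0 := by
          have h3 : pc X j₂.succ = pmap X j₂.succ.succ := by rw [pc, Fin.cons_succ]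
          rw [← h3]
          exact hw j₂.succ
        rw [h2, zero_comp]
  let i : crObj (n + 1) F X ⟶ crObj n F (mergedY X) :=
    kernel.lift LY (kernel.ι LX ≫ F.map (bwd X)) hi
  let r : crObj n F (mergedY X) ⟶ crObj (n + 1) F X :=
    kernel.lift LX ((kernel.ι LY ≫ F.map (fwd X)) ≫ emap F X) hr
  have hir : i ≫ r = 𝟙 (crObj (n + 1) F X) := by
    refine (cancel_mono (kernel.ι LX)).1 ?_
    erw [Category.assoc, Category.id_comp]
    show i ≫ r ≫ kernel.ι LX = kernel.ι LX
    erw [kernel.lift_ι]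
    erw [← Category.assoc, ← Category.assoc]
    have h4 : (i ≫ kernel.ι LY) = kernel.ι LX ≫ F.map (bwd X) := kernel.lift_ι _ _ _
    erw [h4]
    have h5 : ((kernel.ι LX ≫ F.map (bwd X)) ≫ F.map (fwd X)) ≫ emap F X =
        kernel.ι LX ≫ emap F X := by
      calc ((kernel.ι LX ≫ F.map (bwd X)) ≫ F.map (fwd X)) ≫ emap F X
          = kernel.ι LX ≫ F.map (bwd X ≫ fwd X) ≫ emap F X := by
            simp only [Category.assoc, F.map_comp]
        _ = kernel.ι LX ≫ emap F X := by rw [bwd_fwd, F.map_id, Category.id_comp]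
    erw [h5]
    have e1 : kernel.ι LX ≫ F.map (pmap X 0 ≫ pmap X (Fin.succ 0)) = 0 := by
      rw [F.map_comp, ← Category.assoc, hι' 0, zero_comp]
    simp only [emap, Preadditive.comp_sub, Preadditive.comp_add, Category.comp_id,
      hι' 0, hι' (Fin.succ 0), e1, sub_zero, add_zero]
    rfl
  exact ⟨retractHomotopy i r hir H⟩

end CrAux

/-- If the `(m+1)`-st cross effect of `F : ℬ ⥤ Ch_{≥0}(𝒜)` is objectwise
contractible, then so is the `(m+2)`-nd; consequently so is the `(l+1)`-st for every
`l ≥ m`. -/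
theorem cr_contractible_step (m : ℕ) (F : B ⥤ ChainComplex A ℕ)
    (h : ∀ Xs : Fin (m + 1) → B, Nonempty (Homotopy (𝟙 (crObj m F Xs)) 0)) :
    (∀ Xs : Fin (m + 2) → B, Nonempty (Homotopy (𝟙 (crObj (m + 1) F Xs)) 0)) ∧
    (∀ l : ℕ, m ≤ l → ∀ Xs : Fin (l + 1) → B,
      Nonempty (Homotopy (𝟙 (crObj l F Xs)) 0)) := by
  refine ⟨fun Xs => CrAux.step m F h Xs, ?_⟩
  intro l hl
  induction l, hl using Nat.le_induction with
  | base => exact h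
  | succ n hn ih => exact fun Xs => CrAux.step n F ih Xs
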